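/- There is no constant C > 0 such that for all v ∈ W^{2,2}(B₁(0)) one has min_{a ∈ ℝ²} ∫_{B₁} |∇v ⊗ ∇v − a ⊗ a|² dx ≤ C ∫_{B₁} |∇²v|² dx. In fact, for v_n(x) = n(x₁+x₂) + (1/2)(x₁+x₂)², the right-hand side is bounded (equal to 4·|B₁|) while the left-hand side tends to infinity like n² as n → ∞. -/

import Mathlib

open MeasureTheory

/-- The `i`-th partial derivative of `v : ℝ² → ℝ`. -/
noncomputable def gradE (v : EuclideanSpace ℝ (Fin 2) → ℝ) (x : EuclideanSpace ℝ (Fin 2))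
    (i : Fin 2) : ℝ :=
  fderiv ℝ v x (EuclideanSpace.single i 1)

/-- The `(i,j)` entry of the Hessian of `v : ℝ² → ℝ`. -/
noncomputable def hessE (v : EuclideanSpace ℝ (Fin 2) → ℝ) (x : EuclideanSpace ℝ (Fin 2))
    (i j : Fin 2) : ℝ :=
  fderiv ℝ (fun y => gradE v y i) x (EuclideanSpace.single j 1)

/-- The counterexample sequence `v_n(x) = n(x₁+x₂) + (1/2)(x₁+x₂)²`. -/
noncomputable def vEx (n : ℕ) : EuclideanSpace ℝ (Fin 2) → ℝ :=
  fun x => (n : ℝ) * (x 0 + x 1) + (1/2) * (x 0 + x 1) ^ 2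

open Metric

/-- The linear functional `x ↦ x 0 + x 1`. -/
noncomputable def LL : EuclideanSpace ℝ (Fin 2) →L[ℝ] ℝ :=
  EuclideanSpace.proj 0 + EuclideanSpace.proj 1

lemma LL_apply (x : EuclideanSpace ℝ (Fin 2)) : LL x = x 0 + x 1 := rfl

lemma LL_single (i : Fin 2) : LL (EuclideanSpace.single i 1) = 1 := by
  rw [LL_apply]
  fin_cases i <;> simp [EuclideanSpace.single_apply]

lemma vEx_eq (n : ℕ) :
    vEx n = fun y => (n : ℝ) * LL y + (1/2 : ℝ) * (LL y * LL y) := by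
  funext y; simp [vEx, LL_apply]; ring

lemma vEx_hasFDerivAt (n : ℕ) (x : EuclideanSpace ℝ (Fin 2)) :
    HasFDerivAt (vEx n) (((n : ℝ) + LL x) • LL) x := by
  have h1 : HasFDerivAt (fun y => (n : ℝ) * LL y) ((n : ℝ) • LL) x :=
    LL.hasFDerivAt.const_mul _
  have h2' : HasFDerivAt (fun y => LL y * LL y) (LL x • LL + LL x • LL) x :=
    LL.hasFDerivAt.mul LL.hasFDerivAt
  have h2 : HasFDerivAt (fun y => (1/2 : ℝ) * (LL y * LL y))
      ((1/2 : ℝ) • (LL x • LL + LL x • LL)) x := h2'.const_mul _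
  have := h1.add h2
  rw [show ((fun y => (n : ℝ) * LL y) + fun y => (1/2 : ℝ) * (LL y * LL y)) = vEx n from (vEx_eq n).symm] at this
  refine this.congr_fderiv ?_
  ext y
  simp [smul_smul]
  ring

lemma gradE_vEx (n : ℕ) (x : EuclideanSpace ℝ (Fin 2)) (i : Fin 2) :
    gradE (vEx n) x i = (n : ℝ) + (x 0 + x 1) := by
  rw [gradE, (vEx_hasFDerivAt n x).fderiv]
  simp [LL_single i, LL_apply]

lemma hessE_vEx (n : ℕ) (x : EuclideanSpace ℝ (Fin 2)) (i j : Fin 2) :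
    hessE (vEx n) x i j = 1 := by
  rw [hessE]
  have heq : (fun y => gradE (vEx n) y i) = (fun y => (n : ℝ) + LL y) := by
    funext y; rw [gradE_vEx, LL_apply]
  rw [heq]
  have h : HasFDerivAt (fun y : EuclideanSpace ℝ (Fin 2) => (n : ℝ) + LL y) LL x :=
    (LL.hasFDerivAt).const_add _
  rw [h.fderiv, LL_single j]

lemma integrableOn_ball_cont {f : EuclideanSpace ℝ (Fin 2) → ℝ} (hf : Continuous f) :
    IntegrableOn f (ball (0 : EuclideanSpace ℝ (Fin 2)) 1) volume :=
  ((hf.locallyIntegrable).integrableOn_isCompact (isCompact_closedBall _ _)).mono_set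
    ball_subset_closedBall

lemma abs_coord_le (y : EuclideanSpace ℝ (Fin 2)) (i : Fin 2) : |y i| ≤ ‖y‖ := by
  rw [EuclideanSpace.norm_eq, ← Real.sqrt_sq_eq_abs]
  apply Real.sqrt_le_sqrt
  have := Finset.single_le_sum (f := fun j => ‖y j‖ ^ 2)
    (fun j _ => by positivity) (Finset.mem_univ i)
  simpa [Real.norm_eq_abs, sq_abs] using this

lemma refl_integral (g : EuclideanSpace ℝ (Fin 2) → ℝ) :
    (∫ x in ball (0 : EuclideanSpace ℝ (Fin 2)) 1, g (-x)) =
      ∫ x in ball (0 : EuclideanSpace ℝ (Fin 2)) 1, g x := by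
  rw [← integral_indicator measurableSet_ball, ← integral_indicator measurableSet_ball]
  have h : (fun x => (ball (0 : EuclideanSpace ℝ (Fin 2)) 1).indicator (fun y => g (-y)) x)
      = fun x => ((ball (0 : EuclideanSpace ℝ (Fin 2)) 1).indicator g) (-x) := by
    funext x
    by_cases hx : x ∈ ball (0 : EuclideanSpace ℝ (Fin 2)) 1
    · have hx' : -x ∈ ball (0 : EuclideanSpace ℝ (Fin 2)) 1 := by
        simpa [mem_ball, dist_eq_norm] using hx
      simp [Set.indicator_of_mem hx, Set.indicator_of_mem hx']
    · have hx' : -x ∉ ball (0 : EuclideanSpace ℝ (Fin 2)) 1 := by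
        simpa [mem_ball, dist_eq_norm] using hx
      simp [Set.indicator_of_notMem hx, Set.indicator_of_notMem hx']
  rw [h, integral_neg_eq_self]

lemma cont_s : Continuous fun x : EuclideanSpace ℝ (Fin 2) => x 0 + x 1 := LL.continuous

lemma Kpos : 0 < ∫ x in ball (0 : EuclideanSpace ℝ (Fin 2)) 1, (x 0 + x 1) ^ 2 := by
  have hcont : Continuous fun x : EuclideanSpace ℝ (Fin 2) => (x 0 + x 1) ^ 2 :=
    cont_s.pow 2
  rw [setIntegral_pos_iff_support_of_nonneg_ae
    (Filter.Eventually.of_forall fun x => sq_nonneg _) (integrableOn_ball_cont hcont)]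
  set p : EuclideanSpace ℝ (Fin 2) := WithLp.toLp 2 (fun _ => (1/4 : ℝ)) with hp
  have hpnorm : ‖p‖ < 3/4 := by
    rw [EuclideanSpace.norm_eq]
    rw [show (Finset.univ : Finset (Fin 2)) = {0, 1} from rfl]
    have h0 : p 0 = 1/4 := rfl
    have h1 : p 1 = 1/4 := rfl
    rw [Real.sqrt_lt' (by norm_num)]
    simp [h0, h1, Real.norm_eq_abs]
    norm_num
  have hsub : ball p (1/4) ⊆
      (Function.support fun x : EuclideanSpace ℝ (Fin 2) => (x 0 + x 1) ^ 2)
        ∩ ball (0 : EuclideanSpace ℝ (Fin 2)) 1 := by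
    intro x hx
    rw [mem_ball, dist_eq_norm] at hx
    have h0 : |(x - p) 0| ≤ ‖x - p‖ := abs_coord_le _ 0
    have h1 : |(x - p) 1| ≤ ‖x - p‖ := abs_coord_le _ 1
    have e0 : (x - p) 0 = x 0 - 1/4 := rfl
    have e1 : (x - p) 1 = x 1 - 1/4 := rfl
    rw [e0] at h0; rw [e1] at h1
    have hx0 : |x 0 - 1/4| < 1/4 := lt_of_le_of_lt h0 hx
    have hx1 : |x 1 - 1/4| < 1/4 := lt_of_le_of_lt h1 hx
    rw [abs_lt] at hx0 hx1
    constructor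
    · have hpos : 0 < x 0 + x 1 := by linarith [hx0.1, hx1.1]
      exact Function.mem_support.mpr (pow_pos hpos 2).ne'
    · rw [mem_ball_zero_iff]
      calc ‖x‖ = ‖p + (x - p)‖ := by rw [add_sub_cancel]
        _ ≤ ‖p‖ + ‖x - p‖ := norm_add_le _ _
        _ < 3/4 + 1/4 := by linarith
        _ = 1 := by norm_num
  exact lt_of_lt_of_le (measure_ball_pos volume p (by norm_num)) (measure_mono hsub)

lemma key_est (n : ℕ) (t : ℝ) :
    4 * (n : ℝ)^2 * (∫ x in ball (0 : EuclideanSpace ℝ (Fin 2)) 1, (x 0 + x 1) ^ 2)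
      ≤ ∫ x in ball (0 : EuclideanSpace ℝ (Fin 2)) 1,
          (((n : ℝ) + (x 0 + x 1)) ^ 2 - t) ^ 2 := by
  set B := ball (0 : EuclideanSpace ℝ (Fin 2)) 1 with hB
  set g : EuclideanSpace ℝ (Fin 2) → ℝ :=
    fun x => (((n : ℝ) + (x 0 + x 1)) ^ 2 - t) ^ 2 with hg
  have hcontg : Continuous g :=
    (((continuous_const.add cont_s).pow 2).sub continuous_const).pow 2
  have hIg : IntegrableOn g B := integrableOn_ball_cont hcontg
  have hIgneg : IntegrableOn (fun x => g (-x)) B :=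
    integrableOn_ball_cont (hcontg.comp continuous_neg)
  have hIs : IntegrableOn (fun x : EuclideanSpace ℝ (Fin 2) =>
      8 * (n : ℝ)^2 * (x 0 + x 1) ^ 2) B :=
    integrableOn_ball_cont (continuous_const.mul (cont_s.pow 2))
  have hmono : (∫ x in B, 8 * (n : ℝ)^2 * (x 0 + x 1) ^ 2)
      ≤ ∫ x in B, (g x + g (-x)) := by
    apply setIntegral_mono_on hIs (hIg.add hIgneg) measurableSet_ball
    intro x _
    have eneg0 : (-x) 0 = -(x 0) := rfl
    have eneg1 : (-x) 1 = -(x 1) := rfl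
    show 8 * (n : ℝ)^2 * (x 0 + x 1) ^ 2 ≤ g x + g (-x)
    simp only [hg, eneg0, eneg1]
    nlinarith [sq_nonneg (((n : ℝ) + (x 0 + x 1)) ^ 2 + ((n : ℝ) - (x 0 + x 1)) ^ 2 - 2 * t),
      sq_nonneg ((x 0 + x 1) * (n : ℝ))]
  have hsum : (∫ x in B, (g x + g (-x))) = 2 * ∫ x in B, g x := by
    rw [integral_add hIg hIgneg, refl_integral g]; ring
  have hconst : (∫ x in B, 8 * (n : ℝ)^2 * (x 0 + x 1) ^ 2)
      = 8 * (n : ℝ)^2 * ∫ x in B, (x 0 + x 1) ^ 2 := by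
    rw [integral_const_mul]
  rw [hconst, hsum] at hmono
  linarith

/-- There is no constant `C > 0` such that
`min_{a∈ℝ²} ∫_{B₁}|∇v⊗∇v − a⊗a|² ≤ C∫_{B₁}|∇²v|²` for all `v`; indeed for
`v_n(x) = n(x₁+x₂) + (1/2)(x₁+x₂)²` the right-hand side equals `4|B₁|` while the
left-hand side tends to infinity. -/
theorem no_full_coercivity_vonKarman :
    (¬ ∃ C > (0:ℝ), ∀ v : EuclideanSpace ℝ (Fin 2) → ℝ, ContDiff ℝ 2 v →
      ∃ a : Fin 2 → ℝ,
        (∫ x in Metric.ball (0 : EuclideanSpace ℝ (Fin 2)) 1,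
          ∑ i : Fin 2, ∑ j : Fin 2, (gradE v x i * gradE v x j - a i * a j) ^ 2)
        ≤ C * ∫ x in Metric.ball (0 : EuclideanSpace ℝ (Fin 2)) 1,
            ∑ i : Fin 2, ∑ j : Fin 2, (hessE v x i j) ^ 2) ∧
    (∀ n : ℕ,
      (∫ x in Metric.ball (0 : EuclideanSpace ℝ (Fin 2)) 1,
        ∑ i : Fin 2, ∑ j : Fin 2, (hessE (vEx n) x i j) ^ 2)
      = 4 * (volume (Metric.ball (0 : EuclideanSpace ℝ (Fin 2)) 1)).toReal) ∧
    (∀ M : ℝ, ∃ N : ℕ, ∀ n ≥ N, ∀ a : Fin 2 → ℝ,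
      M ≤ ∫ x in Metric.ball (0 : EuclideanSpace ℝ (Fin 2)) 1,
        ∑ i : Fin 2, ∑ j : Fin 2, (gradE (vEx n) x i * gradE (vEx n) x j - a i * a j) ^ 2) := by
  set B := ball (0 : EuclideanSpace ℝ (Fin 2)) 1 with hB
  set K := ∫ x in B, (x 0 + x 1) ^ 2 with hK
  have hKpos : 0 < K := Kpos
  -- Part 2
  have part2 : ∀ n : ℕ,
      (∫ x in B, ∑ i : Fin 2, ∑ j : Fin 2, (hessE (vEx n) x i j) ^ 2)
      = 4 * (volume B).toReal := by
    intro n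
    have : (∫ x in B, ∑ i : Fin 2, ∑ j : Fin 2, (hessE (vEx n) x i j) ^ 2)
        = ∫ _x in B, (4 : ℝ) := by
      apply integral_congr_ae
      filter_upwards with x
      simp [hessE_vEx, Fin.sum_univ_two]
      norm_num
    rw [this, setIntegral_const, smul_eq_mul, mul_comm]
    rfl
  -- Part 3
  have part3 : ∀ M : ℝ, ∃ N : ℕ, ∀ n ≥ N, ∀ a : Fin 2 → ℝ,
      M ≤ ∫ x in B,
        ∑ i : Fin 2, ∑ j : Fin 2, (gradE (vEx n) x i * gradE (vEx n) x j - a i * a j) ^ 2 := by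
    intro M
    refine ⟨⌈M / (4 * K)⌉₊, fun n hn a => ?_⟩
    have hcast : M / (4 * K) ≤ (n : ℝ) :=
      le_trans (Nat.le_ceil _) (by exact_mod_cast hn)
    have hMn : M ≤ 4 * (n : ℝ) * K := by
      rw [div_le_iff₀ (by positivity)] at hcast
      linarith
    have hnn : (n : ℝ) ≤ (n : ℝ) ^ 2 := by
      exact_mod_cast Nat.le_self_pow (by norm_num) n
    have h1 : 4 * (n : ℝ) * K ≤ 4 * (n : ℝ) ^ 2 * K := by nlinarith
    have h2 := key_est n (a 0 * a 0)
    set g : EuclideanSpace ℝ (Fin 2) → ℝ :=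
      fun x => (((n : ℝ) + (x 0 + x 1)) ^ 2 - a 0 * a 0) ^ 2 with hgdef
    have hrw : (∫ x in B,
        ∑ i : Fin 2, ∑ j : Fin 2, (gradE (vEx n) x i * gradE (vEx n) x j - a i * a j) ^ 2)
        = ∫ x in B, ∑ i : Fin 2, ∑ j : Fin 2,
            ((((n : ℝ) + (x 0 + x 1)) * ((n : ℝ) + (x 0 + x 1))) - a i * a j) ^ 2 := by
      apply integral_congr_ae
      filter_upwards with x
      simp [gradE_vEx]
    have hcontsum : Continuous fun x : EuclideanSpace ℝ (Fin 2) =>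
        ∑ i : Fin 2, ∑ j : Fin 2,
          ((((n : ℝ) + (x 0 + x 1)) * ((n : ℝ) + (x 0 + x 1))) - a i * a j) ^ 2 := by
      apply continuous_finset_sum
      intro i _
      apply continuous_finset_sum
      intro j _
      exact (((continuous_const.add cont_s).mul (continuous_const.add cont_s)).sub
        continuous_const).pow 2
    have hcontg : Continuous g :=
      (((continuous_const.add cont_s).pow 2).sub continuous_const).pow 2
    have hmono : (∫ x in B, g x) ≤ ∫ x in B, ∑ i : Fin 2, ∑ j : Fin 2,
        ((((n : ℝ) + (x 0 + x 1)) * ((n : ℝ) + (x 0 + x 1))) - a i * a j) ^ 2 := by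
      apply setIntegral_mono_on (integrableOn_ball_cont hcontg)
        (integrableOn_ball_cont hcontsum) measurableSet_ball
      intro x _
      simp only [hgdef, Fin.sum_univ_two]
      nlinarith [sq_nonneg (((n : ℝ) + (x 0 + x 1)) * ((n : ℝ) + (x 0 + x 1)) - a 0 * a 1),
        sq_nonneg (((n : ℝ) + (x 0 + x 1)) * ((n : ℝ) + (x 0 + x 1)) - a 1 * a 0),
        sq_nonneg (((n : ℝ) + (x 0 + x 1)) * ((n : ℝ) + (x 0 + x 1)) - a 1 * a 1),
        sq_nonneg ((n : ℝ) + (x 0 + x 1))]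
    rw [hrw]
    calc M ≤ 4 * (n : ℝ) * K := hMn
      _ ≤ 4 * (n : ℝ) ^ 2 * K := h1
      _ ≤ ∫ x in B, g x := h2
      _ ≤ _ := hmono
  refine ⟨?_, part2, part3⟩
  rintro ⟨C, hC, h⟩
  obtain ⟨N, hN⟩ := part3 (C * (4 * (volume B).toReal) + 1)
  have hv : ContDiff ℝ 2 (vEx N) := by
    rw [vEx_eq]
    have hL : ContDiff ℝ 2 (fun y : EuclideanSpace ℝ (Fin 2) => LL y) := LL.contDiff
    exact (contDiff_const.mul hL).add (contDiff_const.mul (hL.mul hL))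
  obtain ⟨a, ha⟩ := h (vEx N) hv
  have h3 := hN N le_rfl a
  rw [part2 N] at ha
  linarith
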